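/- Let R ≥ 1 and let a ≥ 2 be an even integer. Let λ_1, …, λ_R be positive reals. Suppose v : [0,∞) → ℝ^R is a solution of the loading dynamics dv_i/dt = λ_i v_i^a − v_i ∑_{j=1}^R λ_j v_j^{a+1} whose initial condition satisfies ∑_{j=1}^R v_j(0)^2 < 1 and v_k(0) < 0 for every k ∈ {1,…,R}. Then v(t) → 0 as t → ∞. -/

import Mathlib

open Filter Topology Set

/-- Backward Grönwall: a solution of `y' = g t * y` with bounded `g` that vanishes at `T`
vanishes at `0`. -/
lemma vanish_back {y g : ℝ → ℝ} {T M : ℝ} (hT : 0 ≤ T)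
    (hy : ∀ t ∈ Set.Icc (0:ℝ) T, HasDerivAt y (g t * y t) t)
    (hM : ∀ t ∈ Set.Icc (0:ℝ) T, |g t| ≤ M)
    (hTz : y T = 0) : y 0 = 0 := by
  set f : ℝ → ℝ := fun s => y (T - s) with hf
  set f' : ℝ → ℝ := fun s => -(g (T - s) * y (T - s)) with hf'
  have hmem : ∀ s ∈ Set.Icc (0:ℝ) T, T - s ∈ Set.Icc (0:ℝ) T := by
    intro s hs; exact ⟨by linarith [hs.2], by linarith [hs.1]⟩
  have hfd : ∀ s ∈ Set.Icc (0:ℝ) T, HasDerivAt f (f' s) s := by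
    intro s hs
    have h1 := hy (T - s) (hmem s hs)
    have h2 : HasDerivAt (fun x : ℝ => T - x) (-1) s := (hasDerivAt_id s).const_sub T
    have := h1.comp s h2
    exact this.congr_deriv (by simp only [hf']; ring)
  have hcont : ContinuousOn f (Set.Icc 0 T) := fun s hs =>
    (hfd s hs).continuousAt.continuousWithinAt
  have key := norm_le_gronwallBound_of_norm_deriv_right_le (a := 0) (b := T)
      (δ := 0) (K := M) (ε := 0) hcont
      (fun s hs => (hfd s (Set.Ico_subset_Icc_self hs)).hasDerivWithinAt)
      (by simp [hf, hTz])
      (fun s hs => by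
        have h1 := hM (T - s) (hmem s (Set.Ico_subset_Icc_self hs))
        have h2 : ‖f' s‖ = |g (T - s)| * |y (T - s)| := by
          simp [hf', abs_mul]
        rw [h2]
        have : |g (T - s)| * |y (T - s)| ≤ M * |y (T - s)| :=
          mul_le_mul_of_nonneg_right h1 (abs_nonneg _)
        simpa [hf, Real.norm_eq_abs] using this)
  have := key T ⟨hT, le_refl T⟩
  rw [gronwallBound_ε0_δ0] at this
  have : ‖f T‖ ≤ 0 := this
  simpa [hf, Real.norm_eq_abs, abs_nonpos_iff] using this

/-- Sign preservation for linear scalar ODEs `y' = g t * y` with `g` continuous on `[0,∞)`. -/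
lemma stays_neg {y g : ℝ → ℝ} (hg : ContinuousOn g (Set.Ici 0))
    (hy : ∀ t ≥ (0:ℝ), HasDerivAt y (g t * y t) t)
    (h0 : y 0 < 0) : ∀ t ≥ (0:ℝ), y t < 0 := by
  intro t ht
  by_contra hc
  push_neg at hc
  have hyc : ContinuousOn y (Set.Icc 0 t) := fun s hs =>
    (hy s hs.1).continuousAt.continuousWithinAt
  have h0m : (0:ℝ) ∈ Set.Icc (y 0) (y t) := ⟨h0.le, hc⟩
  obtain ⟨t0, ht0, hyt0⟩ := intermediate_value_Icc ht hyc h0m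
  have hgc : ContinuousOn g (Set.Icc 0 t0) := hg.mono (fun s hs => hs.1)
  obtain ⟨M, hM⟩ := isCompact_Icc.exists_bound_of_continuousOn hgc
  have := vanish_back ht0.1 (fun s hs => hy s hs.1)
    (fun s hs => by simpa [Real.norm_eq_abs] using hM s hs) hyt0
  linarith

/-- For even positive `a`, the origin attracts every solution of the nonlinear Hebbian
loading dynamics started inside the unit ball with all-negative loadings. -/
theorem stmt2 (R : ℕ) (hR : 1 ≤ R) (a : ℕ) (ha : 2 ≤ a) (haeven : Even a)
    (lam : Fin R → ℝ) (hpos : ∀ i, 0 < lam i)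
    (v : ℝ → Fin R → ℝ)
    (hode : ∀ t ≥ (0 : ℝ), ∀ i,
      HasDerivAt (fun s => v s i)
        (lam i * (v t i) ^ a - v t i * ∑ j, lam j * (v t j) ^ (a + 1)) t)
    (hball : ∑ j, (v 0 j) ^ 2 < 1)
    (hneg : ∀ k, v 0 k < 0) :
    Tendsto v atTop (𝓝 0) := by
  have hOdd : Odd (a + 1) := Even.add_one haeven
  set S : ℝ → ℝ := fun t => ∑ j, lam j * (v t j) ^ (a + 1) with hS
  set ρ : ℝ → ℝ := fun t => ∑ j, (v t j) ^ 2 with hρ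
  -- continuity
  have hvc : ∀ i, ContinuousOn (fun s => v s i) (Set.Ici 0) := fun i s hs =>
    (hode s hs i).continuousAt.continuousWithinAt
  have hSc : ContinuousOn S (Set.Ici 0) :=
    continuousOn_finset_sum _ fun j _ => continuousOn_const.mul ((hvc j).pow _)
  have hρc : ContinuousOn ρ (Set.Ici 0) :=
    continuousOn_finset_sum _ fun j _ => (hvc j).pow _
  -- Step A : coordinates stay negative
  have hvneg : ∀ t ≥ (0:ℝ), ∀ i, v t i < 0 := by
    intro t ht i
    have ha0 : 0 < a := by omega
    have haa : a - 1 + 1 = a := Nat.succ_pred_eq_of_pos ha0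
    have hgc : ContinuousOn (fun s => lam i * (v s i) ^ (a - 1) - S s) (Set.Ici 0) :=
      (continuousOn_const.mul ((hvc i).pow _)).sub hSc
    refine stays_neg (y := fun s => v s i) hgc (fun s hs => ?_) (by simpa using hneg i) t ht
    have h := hode s hs i
    convert h using 1
    calc (lam i * (v s i) ^ (a - 1) - S s) * v s i
        = lam i * ((v s i) ^ (a - 1) * v s i) - v s i * S s := by ring
      _ = lam i * (v s i) ^ a - v s i * S s := by rw [← pow_succ, haa]
  -- derivative of ρ
  have hρd : ∀ t ≥ (0:ℝ), HasDerivAt ρ (2 * S t * (1 - ρ t)) t := by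
    intro t ht
    have h : HasDerivAt ρ
        (∑ j, (2:ℕ) * (v t j) ^ 1 * (lam j * (v t j) ^ a - v t j * S t)) t :=
      HasDerivAt.fun_sum fun j _ => (hode t ht j).fun_pow 2
    convert h using 1
    have key : ∀ j, ((2:ℕ):ℝ) * (v t j) ^ 1 * (lam j * (v t j) ^ a - v t j * S t)
        = 2 * (lam j * (v t j) ^ (a + 1)) - 2 * S t * (v t j) ^ 2 := by
      intro j; rw [pow_succ]; push_cast; ring
    rw [Finset.sum_congr rfl (fun j _ => key j), Finset.sum_sub_distrib,
      ← Finset.mul_sum, ← Finset.mul_sum]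
    simp only [hS, hρ]
    ring
  -- Step B : ρ stays below 1
  have hρlt1 : ∀ t ≥ (0:ℝ), ρ t < 1 := by
    intro t ht
    have hgc : ContinuousOn (fun s => -(2 * S s)) (Set.Ici 0) :=
      (continuousOn_const.mul hSc).neg
    have hz : ∀ s ≥ (0:ℝ), HasDerivAt (fun u => ρ u - 1) (-(2 * S s) * (ρ s - 1)) s := by
      intro s hs
      have := (hρd s hs).sub_const 1
      exact this.congr_deriv (by ring)
    have h0 : ρ 0 - 1 < 0 := by simp only [hρ]; linarith
    have := stays_neg hgc hz h0 t ht
    linarith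
  -- S is nonpositive
  have hSle : ∀ t ≥ (0:ℝ), S t ≤ 0 := by
    intro t ht
    exact Finset.sum_nonpos fun j _ =>
      (mul_neg_of_pos_of_neg (hpos j) (hOdd.pow_neg (hvneg t ht j))).le
  -- ρ is nonnegative
  have hρnn : ∀ t, 0 ≤ ρ t := fun t => Finset.sum_nonneg fun j _ => sq_nonneg _
  -- ρ is antitone on [0, ∞)
  have hρanti : AntitoneOn ρ (Set.Ici 0) := by
    apply antitoneOn_of_deriv_nonpos (convex_Ici 0) hρc
    · intro x hx
      rw [interior_Ici] at hx
      exact (hρd x hx.le).differentiableAt.differentiableWithinAt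
    · intro x hx
      rw [interior_Ici] at hx
      rw [(hρd x hx.le).deriv]
      have h1 := hSle x hx.le
      have h2 := hρlt1 x hx.le
      nlinarith
  -- key decay estimate
  have key : ∀ ε > (0:ℝ), ∃ T ≥ (0:ℝ), ρ T < ε := by
    intro ε hε
    by_cases hcase : ρ 0 < ε
    · exact ⟨0, le_refl 0, hcase⟩
    push_neg at hcase
    by_contra hcon
    push_neg at hcon
    haveI : Nonempty (Fin R) := ⟨⟨0, by omega⟩⟩
    have hne : (Finset.univ : Finset (Fin R)).Nonempty := Finset.univ_nonempty
    set m := Finset.univ.inf' hne lam with hm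
    have hm0 : 0 < m := (Finset.lt_inf'_iff hne).mpr fun i _ => hpos i
    have hR0 : (0:ℝ) < (R:ℝ) := by exact_mod_cast (by omega : 0 < R)
    set δ := ε / R with hδ
    have hδpos : 0 < δ := div_pos hε hR0
    set c := m * δ ^ (a + 1) with hc
    have hc0 : 0 < c := mul_pos hm0 (pow_pos hδpos _)
    have hSb : ∀ t ≥ (0:ℝ), S t ≤ -c := by
      intro t ht
      have hsum : ε ≤ ρ t := hcon t ht
      have hex : ∃ j : Fin R, δ ≤ (v t j) ^ 2 := by
        by_contra hno
        push_neg at hno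
        have hlt : ρ t < ∑ _j : Fin R, δ :=
          Finset.sum_lt_sum_of_nonempty hne fun j _ => hno j
        rw [Finset.sum_const, Finset.card_univ, Fintype.card_fin, nsmul_eq_mul] at hlt
        have : (R:ℝ) * δ = ε := by rw [hδ]; field_simp [hR0.ne']
        linarith
      obtain ⟨j, hj⟩ := hex
      have hvj2 : (v t j) ^ 2 ≤ ρ t :=
        Finset.single_le_sum (fun k _ => sq_nonneg (v t k)) (Finset.mem_univ j)
      have hlt1 := hρlt1 t ht
      have h1 : |v t j| ≤ 1 := by
        by_contra hgt
        push_neg at hgt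
        nlinarith [sq_abs (v t j)]
      have h2 : δ ≤ |v t j| := by
        nlinarith [sq_abs (v t j), abs_nonneg (v t j)]
      have h3 : (v t j) ^ (a + 1) ≤ -(δ ^ (a + 1)) := by
        have hvn := hvneg t ht j
        have hp : δ ^ (a + 1) ≤ |v t j| ^ (a + 1) := pow_le_pow_left₀ hδpos.le h2 _
        rw [abs_of_neg hvn, hOdd.neg_pow] at hp
        linarith
      have hmj : m ≤ lam j := Finset.inf'_le lam (Finset.mem_univ j)
      have hterm : lam j * (v t j) ^ (a + 1) ≤ -c := by
        have h4 : lam j * (v t j) ^ (a + 1) ≤ lam j * (-(δ ^ (a + 1))) :=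
          mul_le_mul_of_nonneg_left h3 (hpos j).le
        have h5 : 0 < δ ^ (a + 1) := pow_pos hδpos _
        nlinarith
      have hsingle : S t ≤ lam j * (v t j) ^ (a + 1) := by
        have hsplit : lam j * (v t j) ^ (a + 1)
            + ∑ k ∈ Finset.univ.erase j, lam k * (v t k) ^ (a + 1) = S t := by
          exact Finset.add_sum_erase Finset.univ
            (fun k => lam k * (v t k) ^ (a + 1)) (Finset.mem_univ j)
        have hrest : ∑ k ∈ Finset.univ.erase j, lam k * (v t k) ^ (a + 1) ≤ 0 :=
          Finset.sum_nonpos fun k _ =>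
            (mul_neg_of_pos_of_neg (hpos k) (hOdd.pow_neg (hvneg t ht k))).le
        linarith
      linarith
    set K := 2 * c * (1 - ρ 0) with hK
    have hρ01 : ρ 0 < 1 := hρlt1 0 (le_refl 0)
    have hK0 : 0 < K := by
      have := hρnn 0
      nlinarith
    have hhd : ∀ t ≥ (0:ℝ), HasDerivAt (fun s => ρ s + K * s)
        (2 * S t * (1 - ρ t) + K) t := by
      intro t ht
      have h1 : HasDerivAt (fun s : ℝ => K * s) K t := by
        simpa using (hasDerivAt_id t).const_mul K
      exact (hρd t ht).add h1
    have hanti2 : AntitoneOn (fun s => ρ s + K * s) (Set.Ici 0) := by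
      apply antitoneOn_of_deriv_nonpos (convex_Ici 0)
        (fun x hx => (hhd x hx).continuousAt.continuousWithinAt)
      · intro x hx
        rw [interior_Ici] at hx
        exact (hhd x hx.le).differentiableAt.differentiableWithinAt
      · intro x hx
        rw [interior_Ici] at hx
        rw [(hhd x hx.le).deriv]
        have h1 := hSb x hx.le
        have h2 : ρ x ≤ ρ 0 := hρanti Set.self_mem_Ici (Set.mem_Ici.mpr hx.le) hx.le
        have h3 := hρlt1 x hx.le
        nlinarith
    set t1 := (ρ 0 + 1) / K with ht1def
    have ht1 : 0 ≤ t1 := div_nonneg (by linarith [hρnn 0]) hK0.le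
    have hle := hanti2 Set.self_mem_Ici ht1 ht1
    have hKt1 : K * t1 = ρ 0 + 1 := by
      rw [ht1def]; field_simp [hK0.ne']
    have := hρnn t1
    simp only [mul_zero, add_zero] at hle
    linarith
  -- ρ tends to 0
  have hρtend : Tendsto ρ atTop (𝓝 0) := by
    rw [Metric.tendsto_atTop]
    intro ε hε
    obtain ⟨T, hT0, hTε⟩ := key ε hε
    refine ⟨T, fun t ht => ?_⟩
    have h1 : ρ t ≤ ρ T := hρanti hT0 (Set.mem_Ici.mpr (hT0.trans ht)) ht
    rw [Real.dist_eq, sub_zero, abs_of_nonneg (hρnn t)]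
    linarith
  -- coordinates tend to 0
  have hsq : ∀ i, Tendsto (fun t => (v t i) ^ 2) atTop (𝓝 0) := by
    intro i
    apply tendsto_of_tendsto_of_tendsto_of_le_of_le' tendsto_const_nhds hρtend
    · exact Eventually.of_forall fun t => sq_nonneg _
    · filter_upwards [eventually_ge_atTop (0:ℝ)] with t ht
      exact Finset.single_le_sum (fun k _ => sq_nonneg (v t k)) (Finset.mem_univ i)
  have hcoord : ∀ i, Tendsto (fun t => v t i) atTop (𝓝 0) := by
    intro i
    rw [tendsto_zero_iff_abs_tendsto_zero]
    have h := (Real.continuous_sqrt.tendsto 0).comp (hsq i)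
    simp only [Function.comp_def, Real.sqrt_sq_eq_abs, Real.sqrt_zero] at h
    exact h
  rw [tendsto_pi_nhds]
  intro i
  simpa using hcoord i
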